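/- (1) Let f be a TFPL with boundary (u^+,v;w) and let u be a 01-word with u →h u^+. Then WR_v(WL_u(f)) = f. (2) Let f be a TFPL with boundary (u,v^+;w) and let v be a 01-word with v →v v^+. Then WL_u(WR_v(f)) = f. -/

import Mathlib

open scoped Classical

namespace TFPLFormal

/-! ## 01-words, modeled as functions `Fin N → Bool` (`true` = 1, `false` = 0) -/

variable {N : ℕ}

/-- the number of ones of a word -/
def count1 (σ : Fin N → Bool) : ℕ := (Finset.univ.filter fun i => σ i = true).card

/-- the number of zeroes of a word -/
def count0 (σ : Fin N → Bool) : ℕ := (Finset.univ.filter fun i => σ i = false).card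

/-- the number of ones among the first `m` letters of a word -/
def pref1 (σ : Fin N → Bool) (m : ℕ) : ℕ :=
  (Finset.univ.filter fun i : Fin N => i.val < m ∧ σ i = true).card

/-- `d(σ)`, the number of inversions of a word: pairs `i < j` with `σ i = 1`, `σ j = 0`. -/
def dinv (σ : Fin N → Bool) : ℕ :=
  (Finset.univ.filter fun p : Fin N × Fin N => p.1 < p.2 ∧ σ p.1 = true ∧ σ p.2 = false).card

/-- the partial order `σ ≤ τ` on words: every prefix of `σ` has at most as many ones as the
corresponding prefix of `τ`. -/
def wle (σ τ : Fin N → Bool) : Prop := ∀ m : ℕ, pref1 σ m ≤ pref1 τ m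

/-- `σ*`: exchange zeroes and ones and reverse the order of the letters. -/
def wstar (σ : Fin N → Bool) : Fin N → Bool := fun i => ! σ i.rev

/-- the list of positions (0-indexed) of the ones of a word, in increasing order -/
def onesList (σ : Fin N → Bool) : List (Fin N) :=
  (Finset.univ.filter fun i => σ i = true).sort (· ≤ ·)

/-- the list of positions (0-indexed) of the zeroes of a word, in increasing order -/
def zerosList (σ : Fin N → Bool) : List (Fin N) :=
  (Finset.univ.filter fun i => σ i = false).sort (· ≤ ·)

/-- `σ →h τ`: the words have the same number of ones, and for every `j`, if the `j`-th one of
`σ` is at position `i`, then the `j`-th one of `τ` is at position `i-1` or `i`. -/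
def hstrip (σ τ : Fin N → Bool) : Prop :=
  count1 σ = count1 τ ∧
  ∀ (j : ℕ) (i : Fin N), (onesList σ)[j]? = some i →
    ∃ i' : Fin N, (onesList τ)[j]? = some i' ∧ (i'.val + 1 = i.val ∨ i' = i)

/-- `σ →v τ`: the words have the same number of zeroes, and for every `j`, if the `j`-th zero of
`σ` is at position `i`, then the `j`-th zero of `τ` is at position `i` or `i+1`. -/
def vstrip (σ τ : Fin N → Bool) : Prop :=
  count0 σ = count0 τ ∧
  ∀ (j : ℕ) (i : Fin N), (zerosList σ)[j]? = some i →
    ∃ i' : Fin N, (zerosList τ)[j]? = some i' ∧ (i' = i ∨ i'.val = i.val + 1)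

/-! ## Young diagrams associated with words -/

/-- the length of the `j`-th row (1-indexed, from the top) of the Young diagram `λ(σ)`:
the number of ones of `σ` preceding the `(|σ|₀ + 1 - j)`-th zero of `σ`.  The diagram has
`|σ|₀` rows (empty rows allowed); outside this range the value is `0`. -/
def lamRow (σ : Fin N → Bool) (j : ℕ) : ℕ :=
  if 1 ≤ j ∧ j ≤ count0 σ then
    match (zerosList σ)[count0 σ - j]? with
    | some p => pref1 σ p.val
    | none => 0
  else 0

/-- the length of the `j`-th row of the conjugate diagram `λ(σ)'`, i.e. the height of the
`j`-th column of `λ(σ)`. -/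
def conjRow (σ : Fin N → Bool) (j : ℕ) : ℕ :=
  if 1 ≤ j then ((Finset.Icc 1 (count0 σ)).filter fun r => j ≤ lamRow σ r).card else 0

/-! ## The coefficients `g_{σ,σ⁺}` -/

/-- the number of ones of `σ` at positions strictly greater than `k` (0-indexed) -/
def suff1 (σ : Fin N → Bool) (k : ℕ) : ℕ :=
  (Finset.univ.filter fun i : Fin N => k < i.val ∧ σ i = true).card

/-- the number of ones of `σ` at positions strictly between `a` and `b` (0-indexed) -/
def mid1 (σ : Fin N → Bool) (a b : ℕ) : ℕ :=
  (Finset.univ.filter fun i : Fin N => a < i.val ∧ i.val < b ∧ σ i = true).card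

/-- the letter of `σ` at (0-indexed) position `a` is `b` -/
def att (σ : Fin N → Bool) (a : ℕ) (b : Bool) : Prop := ∀ i : Fin N, i.val = a → σ i = b

/-- `σ` and `τ` agree at all positions outside `s` -/
def eqOutside (σ τ : Fin N → Bool) (s : Set ℕ) : Prop := ∀ i : Fin N, i.val ∉ s → σ i = τ i

/-- `σ = σL 01 σR` and `σ⁺ = σL 10 σR`, the `01` starting at (0-indexed) position `a` -/
def C2 (σ σp : Fin N → Bool) (a : ℕ) : Prop :=
  a + 1 < N ∧ att σ a false ∧ att σ (a + 1) true ∧ att σp a true ∧ att σp (a + 1) false ∧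
    eqOutside σ σp {a, a + 1}

/-- `σ = σL 01 σM 01 σR` and `σ⁺ = σL 10 σM 10 σR` -/
def C3 (σ σp : Fin N → Bool) (a b : ℕ) : Prop :=
  a + 1 < b ∧ b + 1 < N ∧ att σ a false ∧ att σ (a + 1) true ∧ att σ b false ∧
    att σ (b + 1) true ∧ att σp a true ∧ att σp (a + 1) false ∧ att σp b true ∧
    att σp (b + 1) false ∧ eqOutside σ σp {a, a + 1, b, b + 1}

/-- `σ = σL 001 σR` and `σ⁺ = σL 100 σR` -/
def C4 (σ σp : Fin N → Bool) (a : ℕ) : Prop :=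
  a + 2 < N ∧ att σ a false ∧ att σ (a + 1) false ∧ att σ (a + 2) true ∧
    att σp a true ∧ att σp (a + 1) false ∧ att σp (a + 2) false ∧
    eqOutside σ σp {a, a + 1, a + 2}

/-- `σ = σL 011 σR` and `σ⁺ = σL 110 σR` -/
def C5 (σ σp : Fin N → Bool) (a : ℕ) : Prop :=
  a + 2 < N ∧ att σ a false ∧ att σ (a + 1) true ∧ att σ (a + 2) true ∧
    att σp a true ∧ att σp (a + 1) true ∧ att σp (a + 2) false ∧
    eqOutside σ σp {a, a + 1, a + 2}

/-- the coefficient `g_{σ,σ⁺}`. -/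
noncomputable def gcoef (σ σp : Fin N → Bool) : ℕ :=
  if σp = σ then 1
  else if h : ∃ a, C2 σ σp a then suff1 σ (h.choose + 1) + 1
  else if h : ∃ ab : ℕ × ℕ, C3 σ σp ab.1 ab.2 then
    (suff1 σ (h.choose.2 + 1) + 1) *
      (suff1 σ (h.choose.2 + 1) + mid1 σ (h.choose.1 + 1) h.choose.2 + 1)
  else if h : ∃ a, C4 σ σp a then
    (suff1 σ (h.choose + 2) + 1) * suff1 σ (h.choose + 2) / 2
  else if h : ∃ a, C5 σ σp a then
    (suff1 σ (h.choose + 2) + 2) * (suff1 σ (h.choose + 2) + 1) / 2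
  else 0

/-! ## The graph `G^N` and triangular fully packed loop configurations

`G^N` consists of `N` centered rows (numbered `1, …, N` from top to bottom) of
`3, 5, …, 2N+1` vertices; row `r` occupies the columns `N+1-r, …, N+1+r`.  In addition there
are `2N+1` external vertical edges attached below the bottom row.  A configuration is recorded
by its set of horizontal edges (`(r, c)` stands for the edge from `(r, c)` to `(r, c+1)`) and
its set of vertical edges (`(r, c)` stands for the edge from `(r, c)` to `(r+1, c)`; for
`r = N` these are the external edges).  `L_1, …, L_N` are the leftmost vertices of the rows,
`R_1, …, R_N` the rightmost ones and `B_1, …, B_N` the even vertices of the bottom row, all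
numbered from left to right. -/

structure Config (N : ℕ) where
  horiz : Set (ℕ × ℕ)
  vert : Set (ℕ × ℕ)

/-- `L_i`, the `i`-th leftmost vertex (numbered from left to right, `1 ≤ i ≤ N`) -/
def Lvtx (N i : ℕ) : ℕ × ℕ := (N + 1 - i, i)

/-- `R_i`, the `i`-th rightmost vertex (numbered from left to right, `1 ≤ i ≤ N`) -/
def Rvtx (N i : ℕ) : ℕ × ℕ := (i, N + 1 + i)

/-- `B_i`, the `i`-th even vertex of the bottom row (`1 ≤ i ≤ N`) -/
def Bvtx (N i : ℕ) : ℕ × ℕ := (N, 2 * i)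

/-- the degree of a vertex in a configuration (external edges count) -/
noncomputable def degree (f : Config N) (x : ℕ × ℕ) : ℕ :=
  (if x ∈ f.horiz then 1 else 0) + (if 1 ≤ x.2 ∧ (x.1, x.2 - 1) ∈ f.horiz then 1 else 0) +
    (if x ∈ f.vert then 1 else 0) + (if 1 ≤ x.1 ∧ (x.1 - 1, x.2) ∈ f.vert then 1 else 0)

/-- two vertices are joined by an edge of the configuration -/
def adj (f : Config N) (x y : ℕ × ℕ) : Prop :=
  (y = (x.1, x.2 + 1) ∧ x ∈ f.horiz) ∨ (x = (y.1, y.2 + 1) ∧ y ∈ f.horiz) ∨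
    (y = (x.1 + 1, x.2) ∧ x ∈ f.vert) ∨ (x = (y.1 + 1, y.2) ∧ y ∈ f.vert)

/-- a path of the configuration connects the two vertices -/
def connectedIn (f : Config N) (x y : ℕ × ℕ) : Prop := Relation.ReflTransGen (adj f) x y

/-- valid positions of horizontal edges of `G^N` -/
def hSlot (N : ℕ) (p : ℕ × ℕ) : Prop :=
  1 ≤ p.1 ∧ p.1 ≤ N ∧ N + 1 - p.1 ≤ p.2 ∧ p.2 + 1 ≤ N + 1 + p.1

/-- valid positions of vertical edges of `G^N` (`p.1 = N` gives the external edges) -/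
def vSlot (N : ℕ) (p : ℕ × ℕ) : Prop :=
  (1 ≤ p.1 ∧ p.1 + 1 ≤ N ∧ N + 1 - p.1 ≤ p.2 ∧ p.2 ≤ N + 1 + p.1) ∨
    (p.1 = N ∧ 1 ≤ p.2 ∧ p.2 ≤ 2 * N + 1)

/-- `f` is a triangular fully packed loop configuration of size `N`:
(0) it is a subgraph of `G^N`;
(1) precisely the external edges incident to `B_1, …, B_N` (the even bottom vertices) occur;
(2) the vertices `L_i` and `R_i` have degree `0` or `1`;
(3) all other vertices have degree `2`;
(4) no path connects two vertices of `{L_i}`, and none connects two vertices of `{R_i}`. -/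
def IsTFPL (N : ℕ) (f : Config N) : Prop :=
  (∀ p ∈ f.horiz, hSlot N p) ∧ (∀ p ∈ f.vert, vSlot N p) ∧
  (∀ j : ℕ, (N, j) ∈ f.vert ↔ (1 ≤ j ∧ j ≤ 2 * N + 1 ∧ j % 2 = 0)) ∧
  (∀ i, 1 ≤ i → i ≤ N → degree f (Lvtx N i) ≤ 1) ∧
  (∀ i, 1 ≤ i → i ≤ N → degree f (Rvtx N i) ≤ 1) ∧
  (∀ r c, 1 ≤ r → r ≤ N → N + 1 - r ≤ c → c ≤ N + 1 + r → c ≠ N + 1 - r → c ≠ N + 1 + r →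
      degree f (r, c) = 2) ∧
  (∀ i j, 1 ≤ i → i ≤ N → 1 ≤ j → j ≤ N → i ≠ j → ¬ connectedIn f (Lvtx N i) (Lvtx N j)) ∧
  (∀ i j, 1 ≤ i → i ≤ N → 1 ≤ j → j ≤ N → i ≠ j → ¬ connectedIn f (Rvtx N i) (Rvtx N j))

/-- the boundary `(u, v; w)` of a TFPL:  `u i = 1` iff `L_{i+1}` has degree `1`;
`v i = 0` iff `R_{i+1}` has degree `1`; `w i = 1` iff `B_{i+1}` is connected with some `L_j`
or with some `B_h`, `h < i+1`  (indices of words are 0-indexed). -/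
def HasBoundary (f : Config N) (u v w : Fin N → Bool) : Prop :=
  (∀ i : Fin N, u i = true ↔ degree f (Lvtx N (i.val + 1)) = 1) ∧
  (∀ i : Fin N, v i = false ↔ degree f (Rvtx N (i.val + 1)) = 1) ∧
  (∀ i : Fin N, w i = true ↔
    ((∃ j : Fin N, connectedIn f (Bvtx N (i.val + 1)) (Lvtx N (j.val + 1))) ∨
     (∃ h : Fin N, h < i ∧ connectedIn f (Bvtx N (i.val + 1)) (Bvtx N (h.val + 1)))))

/-! ## Wieland drift -/

/-- the horizontal edges `L'_{i_j} — L_{i_j}` inserted at the left boundary in left-Wieland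
drift with respect to `u⁻ = um` (where `u` is the left boundary word of the TFPL): they are
inserted whenever the `j`-th one of `u` sits at the same position `i_j` as the `j`-th one of
`u⁻`.  The vertex `L'_i` inserted to the left of `L_i` has coordinates `(N+1-i, i-1)`. -/
def insH (u um : Fin N → Bool) : Set (ℕ × ℕ) :=
  {p | ∃ (j : ℕ) (i : Fin N), (onesList um)[j]? = some i ∧ (onesList u)[j]? = some i ∧
        p = (N - i.val, i.val)}

/-- the vertical edges `L'_{i_j} — L_{i_j - 1}` inserted at the left boundary in left-Wieland
drift with respect to `u⁻ = um`: they are inserted whenever the `j`-th one of `u` sits at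
position `i_j - 1`, where `i_j` is the position of the `j`-th one of `u⁻`. -/
def insV (u um : Fin N → Bool) : Set (ℕ × ℕ) :=
  {p | ∃ (j : ℕ) (i i' : Fin N), (onesList um)[j]? = some i ∧ (onesList u)[j]? = some i' ∧
        i'.val + 1 = i.val ∧ p = (N - i.val, i.val)}

/-- the cells of `G^N`, indexed by their top-left corner: the internal unit squares together
with the `2N` external unit squares below the bottom row (which have three surrounding
edges only) -/
def isCell (N i j : ℕ) : Prop :=
  (1 ≤ i ∧ i + 1 ≤ N ∧ N + 1 - i ≤ j ∧ j ≤ N + i) ∨ (i = N ∧ 1 ≤ j ∧ j ≤ 2 * N)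

/-- the odd cells of `G^N` (chessboard coloring, the top left cell being odd) -/
def oddCell (N i j : ℕ) : Prop := isCell N i j ∧ (i + j) % 2 = (N + 1) % 2

/-- a cell is fixed by Wieland gyration iff it contains precisely two edges of the
configuration lying on opposite sides -/
def fixCell (g : Config N) (i j : ℕ) : Prop :=
  (i ≠ N ∧
    ((((i, j) ∈ g.horiz) ∧ ((i + 1, j) ∈ g.horiz) ∧ ((i, j) ∉ g.vert) ∧ ((i, j + 1) ∉ g.vert)) ∨
     (((i, j) ∈ g.vert) ∧ ((i, j + 1) ∈ g.vert) ∧ ((i, j) ∉ g.horiz) ∧ ((i + 1, j) ∉ g.horiz)))) ∨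
  (i = N ∧ ((i, j) ∈ g.vert) ∧ ((i, j + 1) ∈ g.vert) ∧ ((i, j) ∉ g.horiz))

/-- membership of the horizontal edge `p` after applying Wieland gyration to every odd cell:
an edge lying on an odd cell is kept iff that cell is fixed and it was present, or the cell is
not fixed and it was absent; edges on no odd cell are unchanged -/
def gyH (g : Config N) (p : ℕ × ℕ) : Prop :=
  (1 ≤ p.1 ∧ oddCell N (p.1 - 1) p.2 ∧ (fixCell g (p.1 - 1) p.2 ↔ p ∈ g.horiz)) ∨
  (¬ (1 ≤ p.1 ∧ oddCell N (p.1 - 1) p.2) ∧ oddCell N p.1 p.2 ∧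
    (fixCell g p.1 p.2 ↔ p ∈ g.horiz)) ∨
  (¬ (1 ≤ p.1 ∧ oddCell N (p.1 - 1) p.2) ∧ ¬ oddCell N p.1 p.2 ∧ p ∈ g.horiz)

/-- membership of the vertical edge `p` after applying Wieland gyration to every odd cell -/
def gyV (g : Config N) (p : ℕ × ℕ) : Prop :=
  (1 ≤ p.2 ∧ oddCell N p.1 (p.2 - 1) ∧ (fixCell g p.1 (p.2 - 1) ↔ p ∈ g.vert)) ∨
  (¬ (1 ≤ p.2 ∧ oddCell N p.1 (p.2 - 1)) ∧ oddCell N p.1 p.2 ∧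
    (fixCell g p.1 p.2 ↔ p ∈ g.vert)) ∨
  (¬ (1 ≤ p.2 ∧ oddCell N p.1 (p.2 - 1)) ∧ ¬ oddCell N p.1 p.2 ∧ p ∈ g.vert)

/-- left-Wieland drift with respect to `u⁻ = um` of a configuration with left boundary word
`u`: insert the vertices `L'_i` together with the boundary edges prescribed by `u⁻`, apply
Wieland gyration to every odd cell, delete the vertices `R_1, …, R_N` together with their
incident edges, and shift the whole construction one unit to the right. -/
def WLraw (f : Config N) (u um : Fin N → Bool) : Config N :=
  let e : Config N := ⟨f.horiz ∪ insH u um, f.vert ∪ insV u um⟩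
  let g : Config N := ⟨{p | gyH e p}, {p | gyV e p}⟩
  ⟨{p | 1 ≤ p.2 ∧ p.2 ≠ N + p.1 + 1 ∧ (p.1, p.2 - 1) ∈ g.horiz},
   {p | 1 ≤ p.2 ∧ p.2 ≠ N + p.1 + 2 ∧ (p.1, p.2 - 1) ∈ g.vert}⟩

/-- the left boundary word of a configuration -/
noncomputable def leftWord (f : Config N) : Fin N → Bool :=
  fun i => if degree f (Lvtx N (i.val + 1)) = 1 then true else false

/-- `WL_{u⁻}(f)`, left-Wieland drift of `f` with respect to `u⁻ = um` -/
noncomputable def WLd (f : Config N) (um : Fin N → Bool) : Config N := WLraw f (leftWord f) um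

/-- `WL(f)`, left-Wieland drift with respect to the left boundary word of `f` itself -/
noncomputable def WLiter (f : Config N) : Config N := WLd f (leftWord f)

/-- reflection through the vertical symmetry axis of `G^N` -/
def reflect (N : ℕ) (f : Config N) : Config N :=
  ⟨{p | (p.1, 2 * N + 1 - p.2) ∈ f.horiz}, {p | (p.1, 2 * N + 2 - p.2) ∈ f.vert}⟩

/-- `WR_{v⁻}(f)`, right-Wieland drift of `f` with respect to `v⁻ = vm`: the reflection of the
left-Wieland drift, with respect to the reflected-complemented word, of the reflection -/
noncomputable def WRd (f : Config N) (vm : Fin N → Bool) : Config N :=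
  reflect N (WLd (reflect N f) (wstar vm))

/-- `WR(f)`, right-Wieland drift with respect to the right boundary word of `f` itself -/
noncomputable def WRiter (f : Config N) : Config N := reflect N (WLiter (reflect N f))

/-- a configuration is stable if it is invariant under left-Wieland drift -/
def IsStable (N : ℕ) (f : Config N) : Prop := WLiter f = f

/-- `t_{u,v}^w`, the number of TFPLs with boundary `(u, v; w)` -/
noncomputable def tNum (N : ℕ) (u v w : Fin N → Bool) : ℕ :=
  Nat.card {f : Config N // IsTFPL N f ∧ HasBoundary f u v w}

/-- `s_{u,v}^w`, the number of stable TFPLs with boundary `(u, v; w)` -/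
noncomputable def sNum (N : ℕ) (u v w : Fin N → Bool) : ℕ :=
  Nat.card {f : Config N // IsTFPL N f ∧ HasBoundary f u v w ∧ IsStable N f}

/-! ## Column-bounded semistandard skew tableaux: the sets `G_{λ,λ⁺}` -/

/-- `G_{λ,λ⁺}` for diagrams given by their row-length functions `lam ⊆ lamp` (1-indexed rows):
semistandard Young tableaux of skew shape `λ⁺/λ` (positive integer entries on the cells of
`λ⁺` not in `λ`, weakly increasing along rows, strictly increasing down columns) such that all
entries in the `i`-th column counted from the right — out of `ncols` columns, counted
including empty columns — are at most `i`. -/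
structure CBSSYT (lam lamp : ℕ → ℕ) (ncols : ℕ) where
  entry : ℕ → ℕ → ℕ
  support : ∀ r c, entry r c ≠ 0 ↔ (lam r < c ∧ c ≤ lamp r)
  row_weak : ∀ r c, lam r < c → c + 1 ≤ lamp r → entry r c ≤ entry r (c + 1)
  col_strict : ∀ r c, lam r < c → c ≤ lamp r → lam (r + 1) < c → c ≤ lamp (r + 1) →
      entry r c < entry (r + 1) c
  col_bound : ∀ r c, lam r < c → c ≤ lamp r → entry r c + c ≤ ncols + 1

/-! ## Orientations -/

/-- out-degree of a vertex for the orientation `(dH, dV)` (`p ∈ dH`: the horizontal edge at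
`p` points rightwards; `p ∈ dV`: the vertical edge at `p` points downwards) -/
noncomputable def outdeg (f : Config N) (dH dV : Set (ℕ × ℕ)) (x : ℕ × ℕ) : ℕ :=
  (if x ∈ f.horiz ∧ x ∈ dH then 1 else 0) +
  (if 1 ≤ x.2 ∧ (x.1, x.2 - 1) ∈ f.horiz ∧ (x.1, x.2 - 1) ∉ dH then 1 else 0) +
  (if x ∈ f.vert ∧ x ∈ dV then 1 else 0) +
  (if 1 ≤ x.1 ∧ (x.1 - 1, x.2) ∈ f.vert ∧ (x.1 - 1, x.2) ∉ dV then 1 else 0)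

/-- in-degree of a vertex for the orientation `(dH, dV)` -/
noncomputable def indeg (f : Config N) (dH dV : Set (ℕ × ℕ)) (x : ℕ × ℕ) : ℕ :=
  (if x ∈ f.horiz ∧ x ∉ dH then 1 else 0) +
  (if 1 ≤ x.2 ∧ (x.1, x.2 - 1) ∈ f.horiz ∧ (x.1, x.2 - 1) ∈ dH then 1 else 0) +
  (if x ∈ f.vert ∧ x ∉ dV then 1 else 0) +
  (if 1 ≤ x.1 ∧ (x.1 - 1, x.2) ∈ f.vert ∧ (x.1 - 1, x.2) ∈ dV then 1 else 0)

/-! new auxiliary definitions -/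

def Gy (g : Config N) : Config N := ⟨{p | gyH g p}, {p | gyV g p}⟩

lemma Gy_horiz (g : Config N) (p : ℕ × ℕ) : p ∈ (Gy g).horiz ↔ gyH g p := Iff.rfl
lemma Gy_vert (g : Config N) (p : ℕ × ℕ) : p ∈ (Gy g).vert ↔ gyV g p := Iff.rfl

lemma oddCell_bounds {i j : ℕ} (h : oddCell N i j) :
    1 ≤ i ∧ i ≤ N ∧ 1 ≤ j ∧ j + 1 ≤ 2 * N ∧ (i + j) % 2 = (N + 1) % 2 := by
  obtain ⟨hc, hp⟩ := h
  rcases hc with ⟨h1, h2, h3, h4⟩ | ⟨h1, h2, h3⟩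
  · omega
  · refine ⟨by omega, by omega, by omega, ?_, hp⟩
    subst h1; omega

lemma not_oddCell_adj_row {i j : ℕ} (h : oddCell N i j) : ¬ oddCell N (i + 1) j := by
  intro h2
  have := oddCell_bounds h; have := oddCell_bounds h2; omega

lemma not_oddCell_adj_col {i j : ℕ} (h : oddCell N i j) : ¬ oddCell N i (j + 1) := by
  intro h2
  have := oddCell_bounds h; have := oddCell_bounds h2; omega

lemma gyH_upper {g : Config N} {r c : ℕ} (hr : 1 ≤ r) (h : oddCell N (r - 1) c) :
    gyH g (r, c) ↔ (fixCell g (r - 1) c ↔ (r, c) ∈ g.horiz) := by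
  unfold gyH; simp only
  constructor
  · rintro (⟨_, _, h3⟩ | ⟨h1, _⟩ | ⟨h1, _⟩) <;> tauto
  · intro hx; exact Or.inl ⟨hr, h, hx⟩

lemma gyH_lower {g : Config N} {r c : ℕ} (hno : ¬ (1 ≤ r ∧ oddCell N (r - 1) c))
    (h : oddCell N r c) : gyH g (r, c) ↔ (fixCell g r c ↔ (r, c) ∈ g.horiz) := by
  unfold gyH; simp only
  constructor
  · rintro (⟨h1, h2, _⟩ | ⟨_, _, h3⟩ | ⟨_, h2, _⟩) <;> tauto
  · intro hx; exact Or.inr (Or.inl ⟨hno, h, hx⟩)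

lemma gyH_none {g : Config N} {r c : ℕ} (hno : ¬ (1 ≤ r ∧ oddCell N (r - 1) c))
    (h : ¬ oddCell N r c) : gyH g (r, c) ↔ (r, c) ∈ g.horiz := by
  unfold gyH; simp only
  constructor
  · rintro (⟨h1, h2, _⟩ | ⟨_, h2, _⟩ | ⟨_, _, h3⟩) <;> tauto
  · intro hx; exact Or.inr (Or.inr ⟨hno, h, hx⟩)

lemma gyV_left {g : Config N} {r c : ℕ} (hc : 1 ≤ c) (h : oddCell N r (c - 1)) :
    gyV g (r, c) ↔ (fixCell g r (c - 1) ↔ (r, c) ∈ g.vert) := by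
  unfold gyV; simp only
  constructor
  · rintro (⟨_, _, h3⟩ | ⟨h1, _⟩ | ⟨h1, _⟩) <;> tauto
  · intro hx; exact Or.inl ⟨hc, h, hx⟩

lemma gyV_self {g : Config N} {r c : ℕ} (hno : ¬ (1 ≤ c ∧ oddCell N r (c - 1)))
    (h : oddCell N r c) : gyV g (r, c) ↔ (fixCell g r c ↔ (r, c) ∈ g.vert) := by
  unfold gyV; simp only
  constructor
  · rintro (⟨h1, h2, _⟩ | ⟨_, _, h3⟩ | ⟨_, h2, _⟩) <;> tauto
  · intro hx; exact Or.inr (Or.inl ⟨hno, h, hx⟩)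

lemma gyV_none {g : Config N} {r c : ℕ} (hno : ¬ (1 ≤ c ∧ oddCell N r (c - 1)))
    (h : ¬ oddCell N r c) : gyV g (r, c) ↔ (r, c) ∈ g.vert := by
  unfold gyV; simp only
  constructor
  · rintro (⟨h1, h2, _⟩ | ⟨_, h2, _⟩ | ⟨_, _, h3⟩) <;> tauto
  · intro hx; exact Or.inr (Or.inr ⟨hno, h, hx⟩)

/-- memberships of the four (or three) side edges of an odd cell after gyration -/
lemma Gy_top {g : Config N} {i j : ℕ} (h : oddCell N i j) :
    ((i, j) ∈ (Gy g).horiz) ↔ (fixCell g i j ↔ (i, j) ∈ g.horiz) := by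
  rw [Gy_horiz, gyH_lower _ h]
  rintro ⟨hi, hodd⟩
  have b1 := oddCell_bounds h; have b2 := oddCell_bounds hodd
  omega

lemma Gy_bottom {g : Config N} {i j : ℕ} (h : oddCell N i j) :
    ((i + 1, j) ∈ (Gy g).horiz) ↔ (fixCell g i j ↔ (i + 1, j) ∈ g.horiz) := by
  rw [Gy_horiz]
  have : i + 1 - 1 = i := by omega
  rw [show ((i+1 : ℕ), j) = ((i+1 : ℕ), j) from rfl]
  have := gyH_upper (g := g) (r := i + 1) (c := j) (by omega) (by rw [this]; exact h)
  rw [this]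
  rw [show i + 1 - 1 = i from by omega]

lemma Gy_left {g : Config N} {i j : ℕ} (h : oddCell N i j) :
    ((i, j) ∈ (Gy g).vert) ↔ (fixCell g i j ↔ (i, j) ∈ g.vert) := by
  rw [Gy_vert, gyV_self _ h]
  rintro ⟨hj, hodd⟩
  have b1 := oddCell_bounds h; have b2 := oddCell_bounds hodd
  omega

lemma Gy_right {g : Config N} {i j : ℕ} (h : oddCell N i j) :
    ((i, j + 1) ∈ (Gy g).vert) ↔ (fixCell g i j ↔ (i, j + 1) ∈ g.vert) := by
  rw [Gy_vert]
  have := gyV_left (g := g) (r := i) (c := j + 1) (by omega)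
    (by rw [show j + 1 - 1 = j from by omega]; exact h)
  rw [this, show j + 1 - 1 = j from by omega]

set_option maxHeartbeats 1000000 in
lemma fixCell_Gy {g : Config N} {i j : ℕ} (h : oddCell N i j)
    (hbot : i = N → (i, j + 1) ∈ g.vert) :
    fixCell (Gy g) i j ↔ fixCell g i j := by
  have hT := Gy_top (g := g) h
  have hB := Gy_bottom (g := g) h
  have hL := Gy_left (g := g) h
  have hR := Gy_right (g := g) h
  by_cases hi : i = N
  · have hb := hbot hi
    show (_ ∧ _) ∨ (_ ∧ ((i, j) ∈ (Gy g).vert) ∧ ((i, j + 1) ∈ (Gy g).vert) ∧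
        ((i, j) ∉ (Gy g).horiz)) ↔ fixCell g i j
    rw [hT, hL, hR]
    have hFc : fixCell g i j ↔ ((i, j) ∈ g.vert) ∧ ((i, j + 1) ∈ g.vert) ∧
        ((i, j) ∉ g.horiz) := by
      unfold fixCell
      constructor
      · rintro (⟨hne, _⟩ | ⟨_, h1, h2, h3⟩)
        · exact absurd hi hne
        · exact ⟨h1, h2, h3⟩
      · rintro ⟨h1, h2, h3⟩; exact Or.inr ⟨hi, h1, h2, h3⟩
    clear hB hbot
    generalize hF : fixCell g i j = F at hFc ⊢
    clear hT hL hR h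
    revert hb
    generalize ((i, j) ∈ g.vert) = a at hFc ⊢
    generalize ((i, j + 1) ∈ g.vert) = b at hFc ⊢
    generalize ((i, j) ∈ g.horiz) = c at hFc ⊢
    intro hb
    constructor
    · rintro (⟨hne, _⟩ | ⟨_, h1, h2, h3⟩)
      · exact absurd hi hne
      · tauto
    · intro hF2
      right
      refine ⟨hi, ?_⟩
      tauto
  · show (i ≠ N ∧ ((((i, j) ∈ (Gy g).horiz) ∧ ((i + 1, j) ∈ (Gy g).horiz) ∧
        ((i, j) ∉ (Gy g).vert) ∧ ((i, j + 1) ∉ (Gy g).vert)) ∨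
        (((i, j) ∈ (Gy g).vert) ∧ ((i, j + 1) ∈ (Gy g).vert) ∧
        ((i, j) ∉ (Gy g).horiz) ∧ ((i + 1, j) ∉ (Gy g).horiz)))) ∨ (_ ∧ _) ↔ fixCell g i j
    rw [hT, hB, hL, hR]
    have hFc : fixCell g i j ↔ ((((i, j) ∈ g.horiz) ∧ ((i + 1, j) ∈ g.horiz) ∧
        ((i, j) ∉ g.vert) ∧ ((i, j + 1) ∉ g.vert)) ∨
        (((i, j) ∈ g.vert) ∧ ((i, j + 1) ∈ g.vert) ∧
        ((i, j) ∉ g.horiz) ∧ ((i + 1, j) ∉ g.horiz))) := by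
      unfold fixCell
      constructor
      · rintro (⟨_, hx⟩ | ⟨hN, _⟩)
        · exact hx
        · exact absurd hN hi
      · intro hx; exact Or.inl ⟨hi, hx⟩
    clear hbot
    generalize hF : fixCell g i j = F at hFc ⊢
    clear hT hB hL hR h
    generalize ((i, j) ∈ g.horiz) = a at hFc ⊢
    generalize ((i + 1, j) ∈ g.horiz) = b at hFc ⊢
    generalize ((i, j) ∈ g.vert) = c at hFc ⊢
    generalize ((i, j + 1) ∈ g.vert) = d at hFc ⊢
    constructor
    · rintro (⟨_, hx⟩ | ⟨hN, _⟩)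
      · tauto
      · exact absurd hN hi
    · intro hF2
      left
      refine ⟨hi, ?_⟩
      tauto


lemma Gy_Gy (g : Config N) (hbot : ∀ j, oddCell N N j → (N, j + 1) ∈ g.vert) :
    Gy (Gy g) = g := by
  have hb : ∀ (i j : ℕ), oddCell N i j → i = N → (i, j + 1) ∈ g.vert := by
    intro i j ho hN
    subst hN
    exact hbot j ho
  have hH : ∀ r c, gyH (Gy g) (r, c) ↔ (r, c) ∈ g.horiz := by
    intro r c
    by_cases h1 : 1 ≤ r ∧ oddCell N (r - 1) c
    · rw [gyH_upper (g := Gy g) h1.1 h1.2, fixCell_Gy h1.2 (hb _ _ h1.2), Gy_horiz,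
        gyH_upper (g := g) h1.1 h1.2]
      generalize fixCell g (r - 1) c = F
      generalize ((r, c) ∈ g.horiz) = x
      tauto
    · by_cases h2 : oddCell N r c
      · rw [gyH_lower (g := Gy g) h1 h2, fixCell_Gy h2 (hb _ _ h2), Gy_horiz,
          gyH_lower (g := g) h1 h2]
        generalize fixCell g r c = F
        generalize ((r, c) ∈ g.horiz) = x
        tauto
      · rw [gyH_none (g := Gy g) h1 h2, Gy_horiz, gyH_none (g := g) h1 h2]
  have hV : ∀ r c, gyV (Gy g) (r, c) ↔ (r, c) ∈ g.vert := by
    intro r c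
    by_cases h1 : 1 ≤ c ∧ oddCell N r (c - 1)
    · rw [gyV_left (g := Gy g) h1.1 h1.2, fixCell_Gy h1.2 (hb _ _ h1.2), Gy_vert,
        gyV_left (g := g) h1.1 h1.2]
      generalize fixCell g r (c - 1) = F
      generalize ((r, c) ∈ g.vert) = x
      tauto
    · by_cases h2 : oddCell N r c
      · rw [gyV_self (g := Gy g) h1 h2, fixCell_Gy h2 (hb _ _ h2), Gy_vert,
          gyV_self (g := g) h1 h2]
        generalize fixCell g r c = F
        generalize ((r, c) ∈ g.vert) = x
        tauto
      · rw [gyV_none (g := Gy g) h1 h2, Gy_vert, gyV_none (g := g) h1 h2]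
  show (⟨{p | gyH (Gy g) p}, {p | gyV (Gy g) p}⟩ : Config N) = g
  obtain ⟨H, V⟩ := g
  simp only [Config.mk.injEq]
  constructor
  · ext ⟨r, c⟩
    simp only [Set.mem_setOf_eq]
    exact hH r c
  · ext ⟨r, c⟩
    simp only [Set.mem_setOf_eq]
    exact hV r c

/-- the transport of a configuration from the original frame to the frame of the inner
left-Wieland drift in `WRd` -/
def Phi (N : ℕ) (X : Config N) : Config N :=
  ⟨{p | p.2 ≤ 2 * N ∧ (p.1, 2 * N - p.2) ∈ X.horiz},
   {p | p.2 ≤ 2 * N + 1 ∧ (p.1, 2 * N + 1 - p.2) ∈ X.vert}⟩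

lemma Phi_horiz {X : Config N} {r c : ℕ} :
    (r, c) ∈ (Phi N X).horiz ↔ (c ≤ 2 * N ∧ (r, 2 * N - c) ∈ X.horiz) := Iff.rfl
lemma Phi_vert {X : Config N} {r c : ℕ} :
    (r, c) ∈ (Phi N X).vert ↔ (c ≤ 2 * N + 1 ∧ (r, 2 * N + 1 - c) ∈ X.vert) := Iff.rfl

lemma oddCell_mirror {i j k : ℕ} (h : j + k = 2 * N) : oddCell N i j ↔ oddCell N i k := by
  unfold oddCell isCell
  omega

lemma oddCell_col_bounds {i j : ℕ} (h : oddCell N i j) : 1 ≤ j ∧ j + 1 ≤ 2 * N := by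
  have := oddCell_bounds h; omega

lemma fixCell_Phi {X : Config N} {i j : ℕ} (hj : j + 1 ≤ 2 * N) :
    fixCell (Phi N X) i j ↔ fixCell X i (2 * N - j) := by
  unfold fixCell
  rw [show ((i,j) ∈ (Phi N X).horiz) ↔ _ from Phi_horiz,
    show ((i+1,j) ∈ (Phi N X).horiz) ↔ _ from Phi_horiz,
    show ((i,j) ∈ (Phi N X).vert) ↔ _ from Phi_vert,
    show ((i,j+1) ∈ (Phi N X).vert) ↔ _ from Phi_vert]
  rw [show 2 * N + 1 - j = (2 * N - j) + 1 from by omega,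
    show 2 * N + 1 - (j + 1) = 2 * N - j from by omega]
  have h1 : j ≤ 2 * N := by omega
  have h2 : j + 1 ≤ 2 * N + 1 := by omega
  simp only [h1, h2, true_and]
  generalize ((i, 2 * N - j) ∈ X.horiz) = a
  generalize ((i + 1, 2 * N - j) ∈ X.horiz) = b
  generalize ((i, 2 * N - j) ∈ X.vert) = cc
  generalize ((i, 2 * N - j + 1) ∈ X.vert) = d
  constructor
  · rintro (⟨hi, hx⟩ | ⟨hi, hx⟩)
    · left; refine ⟨hi, ?_⟩; tauto
    · right; refine ⟨hi, ?_⟩; tauto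
  · rintro (⟨hi, hx⟩ | ⟨hi, hx⟩)
    · left; refine ⟨hi, ?_⟩; tauto
    · right; refine ⟨hi, ?_⟩; tauto

lemma Gy_Phi (X : Config N) : Gy (Phi N X) = Phi N (Gy X) := by
  have hH : ∀ r c, gyH (Phi N X) (r, c) ↔ (c ≤ 2*N ∧ gyH X (r, 2*N - c)) := by
    intro r c
    by_cases hc : c ≤ 2 * N
    case neg =>
      have h1 : ¬ (1 ≤ r ∧ oddCell N (r - 1) c) := by
        rintro ⟨_, ho⟩; have := oddCell_col_bounds ho; omega
      have h2 : ¬ oddCell N r c := by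
        intro ho; have := oddCell_col_bounds ho; omega
      rw [gyH_none h1 h2, Phi_horiz]
      simp only [hc, false_and]
    case pos =>
      by_cases h1 : 1 ≤ r ∧ oddCell N (r - 1) c
      · have hbo := oddCell_col_bounds h1.2
        have hmir : oddCell N (r - 1) (2 * N - c) :=
          (oddCell_mirror (by omega)).1 h1.2
        rw [gyH_upper h1.1 h1.2, gyH_upper h1.1 hmir,
          fixCell_Phi (by omega), Phi_horiz]
        simp only [hc, true_and]
      · by_cases h2 : oddCell N r c
        · have hbo := oddCell_col_bounds h2
          have hmir : oddCell N r (2 * N - c) := (oddCell_mirror (by omega)).1 h2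
          have h1' : ¬ (1 ≤ r ∧ oddCell N (r - 1) (2 * N - c)) := by
            rintro ⟨hr, ho⟩
            exact h1 ⟨hr, (oddCell_mirror (k := c) (by omega)).1 ho⟩
          rw [gyH_lower h1 h2, gyH_lower h1' hmir, fixCell_Phi (by omega), Phi_horiz]
          simp only [hc, true_and]
        · have h1' : ¬ (1 ≤ r ∧ oddCell N (r - 1) (2 * N - c)) := by
            rintro ⟨hr, ho⟩
            have hbo := oddCell_col_bounds ho
            exact h1 ⟨hr, (oddCell_mirror (k := c) (by omega)).1 ho⟩
          have h2' : ¬ oddCell N r (2 * N - c) := by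
            intro ho
            have hbo := oddCell_col_bounds ho
            exact h2 ((oddCell_mirror (k := c) (by omega)).1 ho)
          rw [gyH_none h1 h2, gyH_none h1' h2', Phi_horiz]
  have hV : ∀ r c, gyV (Phi N X) (r, c) ↔ (c ≤ 2*N+1 ∧ gyV X (r, 2*N+1 - c)) := by
    intro r c
    by_cases hc : c ≤ 2 * N + 1
    case neg =>
      have h1 : ¬ (1 ≤ c ∧ oddCell N r (c - 1)) := by
        rintro ⟨_, ho⟩; have := oddCell_col_bounds ho; omega
      have h2 : ¬ oddCell N r c := by
        intro ho; have := oddCell_col_bounds ho; omega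
      rw [gyV_none h1 h2, Phi_vert]
      simp only [hc, false_and]
    case pos =>
      by_cases h1 : 1 ≤ c ∧ oddCell N r (c - 1)
      · -- inner left cell (r, c-1) odd ↔ f-side self cell (r, 2N+1-c) odd
        have hbo := oddCell_col_bounds h1.2
        have hmir : oddCell N r (2 * N + 1 - c) :=
          (oddCell_mirror (k := 2 * N + 1 - c) (by omega)).1 h1.2
        have h1' : ¬ (1 ≤ 2*N+1-c ∧ oddCell N r (2*N+1-c - 1)) := by
          rintro ⟨hx, ho⟩
          have hbo2 := oddCell_bounds ho
          have hbo3 := oddCell_bounds h1.2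
          omega
        rw [gyV_left h1.1 h1.2, gyV_self h1' hmir, fixCell_Phi (by omega), Phi_vert]
        rw [show 2*N - (c-1) = 2*N+1-c from by omega]
        simp only [hc, true_and]
      · by_cases h2 : oddCell N r c
        · -- inner self cell (r,c) odd ↔ f-side left cell (r, 2N-c) odd
          have hbo := oddCell_col_bounds h2
          have hmir : oddCell N r (2 * N - c) :=
            (oddCell_mirror (k := 2 * N - c) (by omega)).1 h2
          rw [gyV_self h1 h2, gyV_left (show (1:ℕ) ≤ 2*N+1-c from by omega)
            (by rw [show 2*N+1-c-1 = 2*N-c from by omega]; exact hmir),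
            show 2*N+1-c-1 = 2*N-c from by omega, fixCell_Phi (by omega), Phi_vert]
          simp only [hc, true_and]
        · have h1' : ¬ (1 ≤ 2*N+1-c ∧ oddCell N r (2*N+1-c - 1)) := by
            rintro ⟨hx, ho⟩
            have hbo := oddCell_col_bounds ho
            exact h2 ((oddCell_mirror (k := c) (by omega)).1 ho)
          have h2' : ¬ oddCell N r (2*N+1-c) := by
            intro ho
            have hbo := oddCell_col_bounds ho
            exact h1 ⟨by omega, (oddCell_mirror (k := c - 1) (by omega)).1 ho⟩
          rw [gyV_none h1 h2, gyV_none h1' h2', Phi_vert]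
  show (⟨{p | gyH (Phi N X) p}, {p | gyV (Phi N X) p}⟩ : Config N) =
    ⟨{p | p.2 ≤ 2*N ∧ (p.1, 2*N - p.2) ∈ (Gy X).horiz},
     {p | p.2 ≤ 2*N+1 ∧ (p.1, 2*N+1 - p.2) ∈ (Gy X).vert}⟩
  simp only [Config.mk.injEq]
  constructor
  · ext ⟨r, c⟩
    simp only [Set.mem_setOf_eq]
    exact hH r c
  · ext ⟨r, c⟩
    simp only [Set.mem_setOf_eq]
    exact hV r c



/-! ## plumbing lemmas -/

lemma WLraw_horiz (f : Config N) (u um : Fin N → Bool) (r c : ℕ) :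
    (r, c) ∈ (WLraw f u um).horiz ↔
      (1 ≤ c ∧ c ≠ N + r + 1 ∧
        (r, c - 1) ∈ (Gy (⟨f.horiz ∪ insH u um, f.vert ∪ insV u um⟩ : Config N)).horiz) :=
  Iff.rfl

lemma WLraw_vert (f : Config N) (u um : Fin N → Bool) (r c : ℕ) :
    (r, c) ∈ (WLraw f u um).vert ↔
      (1 ≤ c ∧ c ≠ N + r + 2 ∧
        (r, c - 1) ∈ (Gy (⟨f.horiz ∪ insH u um, f.vert ∪ insV u um⟩ : Config N)).vert) :=
  Iff.rfl

lemma reflect_horiz (f : Config N) (r c : ℕ) :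
    (r, c) ∈ (reflect N f).horiz ↔ (r, 2 * N + 1 - c) ∈ f.horiz := Iff.rfl

lemma reflect_vert (f : Config N) (r c : ℕ) :
    (r, c) ∈ (reflect N f).vert ↔ (r, 2 * N + 2 - c) ∈ f.vert := Iff.rfl

lemma insH_shape {u um : Fin N → Bool} {p : ℕ × ℕ} (h : p ∈ insH u um) :
    ∃ k : Fin N, p = (N - k.val, k.val) := by
  obtain ⟨j, i, _, _, hp⟩ := h
  exact ⟨i, hp⟩

lemma insV_shape {u um : Fin N → Bool} {p : ℕ × ℕ} (h : p ∈ insV u um) :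
    ∃ k : Fin N, p = (N - k.val, k.val) := by
  obtain ⟨j, i, i', _, _, _, hp⟩ := h
  exact ⟨i, hp⟩

/-! ## sorted lists -/

lemma getElem?_sorted_lt {l : List (Fin N)} (hl : l.Pairwise (· < ·)) :
    ∀ (j : ℕ) (i : Fin N),
      l[j]? = some i ↔ (i ∈ l ∧ l.countP (fun x => decide (x < i)) = j) := by
  induction l with
  | nil => intro j i; simp
  | cons a t ih =>
    have ha : ∀ x ∈ t, a < x := fun x hx => (List.pairwise_cons.1 hl).1 x hx
    have ht : t.Pairwise (· < ·) := (List.pairwise_cons.1 hl).2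
    intro j i
    cases j with
    | zero =>
      simp only [List.getElem?_cons_zero, List.countP_cons, Option.some.injEq]
      constructor
      · intro hai
        subst hai
        refine ⟨List.mem_cons_self, ?_⟩
        have h1 : (t.countP fun x => decide (x < a)) = 0 := by
          rw [List.countP_eq_zero]
          intro x hx
          simp only [decide_eq_true_eq]
          exact fun hlt => absurd hlt (not_lt.2 (le_of_lt (ha x hx)))
        simp [h1]
      · rintro ⟨hmem, hcount⟩
        rcases List.mem_cons.1 hmem with rfl | hmem'
        · rfl
        · exfalso
          have hd : (decide (a < i) : Bool) = true := by simp [ha i hmem']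
          rw [hd] at hcount
          simp at hcount
      | succ j =>
      simp only [List.getElem?_cons_succ, List.countP_cons]
      rw [ih ht j i]
      constructor
      · rintro ⟨hmem, hcount⟩
        have hd : (decide (a < i) : Bool) = true := by simp [ha i hmem]
        refine ⟨List.mem_cons_of_mem _ hmem, ?_⟩
        rw [hd]
        simp [hcount]
      · rintro ⟨hmem, hcount⟩
        rcases List.mem_cons.1 hmem with rfl | hmem'
        · exfalso
          have h0 : (decide (i < i) : Bool) = false := by simp
          rw [h0] at hcount
          have h2 : (t.countP fun x => decide (x < i)) = 0 := by
            rw [List.countP_eq_zero]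
            intro x hx
            simp only [decide_eq_true_eq]
            exact fun hlt => absurd hlt (not_lt.2 (le_of_lt (ha x hx)))
          simp [h2] at hcount
        · have hd : (decide (a < i) : Bool) = true := by simp [ha i hmem']
          rw [hd] at hcount
          simp at hcount
          exact ⟨hmem', by omega⟩

lemma sort_getElem? (s : Finset (Fin N)) (j : ℕ) (i : Fin N) :
    (s.sort (· ≤ ·))[j]? = some i ↔ (i ∈ s ∧ (s.filter (· < i)).card = j) := by
  rw [getElem?_sorted_lt (Finset.sortedLT_sort s).pairwise j i, Finset.mem_sort]
  have h1 : Multiset.countP (fun x => x < i) ((s.sort (· ≤ ·) : List (Fin N)) : Multiset (Fin N))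
      = (s.sort (· ≤ ·)).countP (fun b => decide (b < i)) := Multiset.coe_countP _ _
  rw [Finset.sort_eq] at h1
  have h2 : (s.sort (· ≤ ·)).countP (fun x => decide (x < i)) = (s.filter (· < i)).card := by
    rw [← h1, Multiset.countP_eq_card_filter, Finset.card_def, Finset.filter_val]
  rw [h2]

lemma filter_card_eq_of_mem {s : Finset (Fin N)} {x i : Fin N} (hx : x ∈ s) (hi : i ∈ s)
    (h : (s.filter (· < x)).card = (s.filter (· < i)).card) : x = i := by
  by_contra hne
  rcases lt_or_gt_of_ne hne with hlt | hgt
  · have hsub : insert x (s.filter (· < x)) ⊆ s.filter (· < i) := by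
      intro y hy
      rcases Finset.mem_insert.1 hy with rfl | hy'
      · exact Finset.mem_filter.2 ⟨hx, hlt⟩
      · obtain ⟨hys, hyx⟩ := Finset.mem_filter.1 hy'
        exact Finset.mem_filter.2 ⟨hys, lt_trans hyx hlt⟩
    have hcard := Finset.card_le_card hsub
    rw [Finset.card_insert_of_notMem (by
      intro hmem
      exact absurd (Finset.mem_filter.1 hmem).2 (lt_irrefl x))] at hcard
    omega
  · have hsub : insert i (s.filter (· < i)) ⊆ s.filter (· < x) := by
      intro y hy
      rcases Finset.mem_insert.1 hy with rfl | hy'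
      · exact Finset.mem_filter.2 ⟨hi, hgt⟩
      · obtain ⟨hys, hyi⟩ := Finset.mem_filter.1 hy'
        exact Finset.mem_filter.2 ⟨hys, lt_trans hyi hgt⟩
    have hcard := Finset.card_le_card hsub
    rw [Finset.card_insert_of_notMem (by
      intro hmem
      exact absurd (Finset.mem_filter.1 hmem).2 (lt_irrefl i))] at hcard
    omega

lemma filter_card_match {s t : Finset (Fin N)} {ψ : Fin N → Fin N}
    (hmem : ∀ i ∈ s, ψ i ∈ t) (hsurj : ∀ y ∈ t, ∃ i ∈ s, ψ i = y)
    (hmono : ∀ i ∈ s, ∀ i₂ ∈ s, i < i₂ → ψ i < ψ i₂) :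
    ∀ i ∈ s, (t.filter (· < ψ i)).card = (s.filter (· < i)).card := by
  intro i hi
  have himg : t.filter (· < ψ i) = (s.filter (· < i)).image ψ := by
    ext y
    constructor
    · intro hy
      obtain ⟨hyt, hylt⟩ := Finset.mem_filter.1 hy
      obtain ⟨x, hxs, rfl⟩ := hsurj y hyt
      refine Finset.mem_image.2 ⟨x, Finset.mem_filter.2 ⟨hxs, ?_⟩, rfl⟩
      by_contra hnot
      rcases eq_or_lt_of_le (not_lt.1 hnot) with heq | hlt
      · rw [← heq] at hylt
        exact absurd hylt (lt_irrefl _)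
      · exact absurd (hmono i hi x hxs hlt) (not_lt.2 (le_of_lt hylt))
    · intro hy
      obtain ⟨x, hx, rfl⟩ := Finset.mem_image.1 hy
      obtain ⟨hxs, hxlt⟩ := Finset.mem_filter.1 hx
      exact Finset.mem_filter.2 ⟨hmem x hxs, hmono x hxs i hi hxlt⟩
  rw [himg, Finset.card_image_of_injOn]
  intro x hx y hy hxy
  have hxs := (Finset.mem_filter.1 (Finset.mem_coe.1 hx)).1
  have hys := (Finset.mem_filter.1 (Finset.mem_coe.1 hy)).1
  by_contra hne
  rcases lt_or_gt_of_ne hne with hlt | hgt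
  · exact absurd hxy (ne_of_lt (hmono x hxs y hys hlt))
  · exact absurd hxy.symm (ne_of_lt (hmono y hys x hxs hgt))


/-! ## the local conditions used in the proof -/

structure NiceCfg (N : ℕ) (f : Config N) (v : Fin N → Bool) : Prop where
  hslot : ∀ p ∈ f.horiz, hSlot N p
  vslot : ∀ p ∈ f.vert, vSlot N p
  vext : ∀ j : ℕ, (N, j) ∈ f.vert ↔ (1 ≤ j ∧ j ≤ 2 * N + 1 ∧ j % 2 = 0)
  degR : ∀ r, 1 ≤ r → r ≤ N → degree f (Rvtx N r) ≤ 1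
  deg2 : ∀ r, 1 ≤ r → r ≤ N → degree f (r, N + r) = 2
  nopath : ∀ r, 1 ≤ r → r ≤ N → ¬((r, N + r) ∈ f.horiz ∧ (r - 1, N + r) ∈ f.vert)
  vword : ∀ i : Fin N, v i = false ↔ degree f (Rvtx N (i.val + 1)) = 1

/-- the configuration obtained from `f` by adding the inserted boundary edges of
left-Wieland drift with respect to `u` -/
def Ec (f : Config N) (u : Fin N → Bool) : Config N :=
  ⟨f.horiz ∪ insH (leftWord f) u, f.vert ∪ insV (leftWord f) u⟩

lemma WLd_horiz (f : Config N) (u : Fin N → Bool) (r c : ℕ) :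
    (r, c) ∈ (WLd f u).horiz ↔
      (1 ≤ c ∧ c ≠ N + r + 1 ∧ (r, c - 1) ∈ (Gy (Ec f u)).horiz) := Iff.rfl

lemma WLd_vert (f : Config N) (u : Fin N → Bool) (r c : ℕ) :
    (r, c) ∈ (WLd f u).vert ↔
      (1 ≤ c ∧ c ≠ N + r + 2 ∧ (r, c - 1) ∈ (Gy (Ec f u)).vert) := Iff.rfl

section Core

variable {f : Config N} {v : Fin N → Bool} {u : Fin N → Bool}

lemma f_horiz_col0 (hf : NiceCfg N f v) {r c : ℕ}
    (h : r + c ≤ N ∨ N + r < c ∨ r = 0 ∨ N < r) : (r, c) ∉ f.horiz := by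
  intro hm
  have := hf.hslot _ hm
  unfold hSlot at this
  dsimp only at this
  omega

lemma f_vert_col0 (hf : NiceCfg N f v) {r c : ℕ}
    (h : r + c ≤ N ∨ N + 1 + r < c ∨ N < r ∨ (r = 0 ∧ 0 < N)) : (r, c) ∉ f.vert := by
  intro hm
  have := hf.vslot _ hm
  unfold vSlot at this
  dsimp only at this
  omega

lemma Ec_horiz (hf : NiceCfg N f v) {r c : ℕ} (h : ¬(r + c = N ∧ c < N)) :
    ((r, c) ∈ (Ec f u).horiz) ↔ (r, c) ∈ f.horiz := by
  constructor
  · intro hm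
    rcases hm with hm | hm
    · exact hm
    · exfalso
      obtain ⟨k, hk⟩ := insH_shape hm
      have hkN : k.val < N := k.isLt
      have : r = N - k.val ∧ c = k.val :=
        ⟨congrArg Prod.fst hk, congrArg Prod.snd hk⟩
      omega
  · intro hm
    exact Or.inl hm

lemma Ec_vert (hf : NiceCfg N f v) {r c : ℕ} (h : ¬(r + c = N ∧ c < N)) :
    ((r, c) ∈ (Ec f u).vert) ↔ (r, c) ∈ f.vert := by
  constructor
  · intro hm
    rcases hm with hm | hm
    · exact hm
    · exfalso
      obtain ⟨k, hk⟩ := insV_shape hm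
      have hkN : k.val < N := k.isLt
      have : r = N - k.val ∧ c = k.val :=
        ⟨congrArg Prod.fst hk, congrArg Prod.snd hk⟩
      omega
  · intro hm
    exact Or.inl hm

lemma Ec_bot (hf : NiceCfg N f v) : ∀ j, oddCell N N j → (N, j + 1) ∈ (Ec f u).vert := by
  intro j hodd
  have hb := oddCell_bounds hodd
  have hj : j % 2 = 1 := by omega
  left
  rw [hf.vext]
  omega

lemma not_oddCell_of_arith {i j : ℕ}
    (h : (i + j) % 2 = N % 2 ∨ N + i < j ∨ (N < i + j ∧ i + 1 > N ∧ (i ≠ N ∨ 2*N < j)) ∨ j = 0) :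
    ¬ oddCell N i j := by
  intro h2
  unfold oddCell isCell at h2
  omega

/-- the deleted right edges are never touched by gyration -/
lemma G_Hr (hf : NiceCfg N f v) (r : ℕ) :
    ((r, N + r) ∈ (Gy (Ec f u)).horiz) ↔ (r, N + r) ∈ f.horiz := by
  rw [Gy_horiz, gyH_none, Ec_horiz hf (by omega)]
  · rintro ⟨hr1, h2⟩
    unfold oddCell isCell at h2
    omega
  · intro h2
    unfold oddCell isCell at h2
    omega

lemma G_Vd (hf : NiceCfg N f v) (r : ℕ) :
    ((r, N + 1 + r) ∈ (Gy (Ec f u)).vert) ↔ (r, N + 1 + r) ∈ f.vert := by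
  rw [Gy_vert, gyV_none, Ec_vert hf (by omega)]
  · rintro ⟨hr1, h2⟩
    unfold oddCell isCell at h2
    omega
  · intro h2
    unfold oddCell isCell at h2
    omega

/-- degree of the right boundary vertices of `f` -/
lemma degree_Rvtx (hf : NiceCfg N f v) {r : ℕ} (h1 : 1 ≤ r) (h2 : r ≤ N) :
    degree f (Rvtx N r) =
      (if (r, N + r) ∈ f.horiz then 1 else 0) +
      (if (r, N + 1 + r) ∈ f.vert then 1 else 0) := by
  unfold degree Rvtx
  dsimp only
  rw [show N + 1 + r - 1 = N + r from by omega]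
  rw [if_neg (f_horiz_col0 hf (by omega))]
  rw [if_congr (show (1 ≤ N + 1 + r ∧ (r, N + r) ∈ f.horiz) ↔ (r, N + r) ∈ f.horiz from
      ⟨fun h => h.2, fun h => ⟨by omega, h⟩⟩) rfl rfl]
  rw [if_neg (show ¬(1 ≤ r ∧ (r - 1, N + 1 + r) ∈ f.vert) from
      fun h => absurd h.2 (f_vert_col0 hf (by omega)))]
  omega


lemma leftWord_true (g : Config N) (i : Fin N) :
    leftWord g i = true ↔ degree g (Lvtx N (i.val + 1)) = 1 := by
  unfold leftWord
  split_ifs with h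
  · simp [h]
  · simp [h]

lemma ite_add_ite_eq_one {A B : Prop} :
    ((if A then 1 else 0) + (if B then 1 else 0) = 1) ↔ (A ↔ ¬ B) := by
  by_cases hA : A <;> by_cases hB : B <;> simp [hA, hB]

/-- the degree, in `reflect N (WLd f u)`, of the left boundary vertices -/
lemma degree_reflect_WLd (hf : NiceCfg N f v) (i : Fin N) :
    degree (reflect N (WLd f u)) (Lvtx N (i.val + 1)) =
      (if (N - i.val, N + (N - i.val) - 1) ∈ (Gy (Ec f u)).horiz then 1 else 0) +
      (if (N - i.val, N + (N - i.val)) ∈ (Gy (Ec f u)).vert then 1 else 0) := by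
  have hn : i.val < N := i.isLt
  unfold degree Lvtx
  dsimp only
  rw [show N + 1 - (i.val + 1) = N - i.val from by omega,
    show i.val + 1 - 1 = i.val from by omega]
  have e1 : ((N - i.val, i.val + 1) ∈ (reflect N (WLd f u)).horiz) ↔
      (N - i.val, N + (N - i.val) - 1) ∈ (Gy (Ec f u)).horiz := by
    rw [reflect_horiz, show 2*N + 1 - (i.val + 1) = 2*N - i.val from by omega, WLd_horiz,
      show 2*N - i.val - 1 = N + (N - i.val) - 1 from by omega]
    constructor
    · rintro ⟨_, _, h⟩; exact h
    · intro h; exact ⟨by omega, by omega, h⟩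
  have e2 : ¬ (1 ≤ i.val + 1 ∧ (N - i.val, i.val) ∈ (reflect N (WLd f u)).horiz) := by
    rintro ⟨_, h⟩
    rw [reflect_horiz, WLd_horiz] at h
    obtain ⟨_, hne, _⟩ := h
    omega
  have e3 : ((N - i.val, i.val + 1) ∈ (reflect N (WLd f u)).vert) ↔
      (N - i.val, N + (N - i.val)) ∈ (Gy (Ec f u)).vert := by
    rw [reflect_vert, show 2*N + 2 - (i.val + 1) = 2*N + 1 - i.val from by omega, WLd_vert,
      show 2*N + 1 - i.val - 1 = N + (N - i.val) from by omega]
    constructor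
    · rintro ⟨_, _, h⟩; exact h
    · intro h; exact ⟨by omega, by omega, h⟩
  have e4 : ¬ (1 ≤ N - i.val ∧ (N - i.val - 1, i.val + 1) ∈ (reflect N (WLd f u)).vert) := by
    rintro ⟨_, h⟩
    rw [reflect_vert, WLd_vert] at h
    obtain ⟨_, hne, _⟩ := h
    omega
  rw [if_congr e1 rfl rfl,
    if_neg e2,
    if_congr e3 rfl rfl,
    if_neg e4]
  omega

/-- expansion of the degree-2 condition at the interior vertex `(r, N+r)` -/
lemma deg2_expand (hf : NiceCfg N f v) {r : ℕ} (h1 : 1 ≤ r) (h2 : r ≤ N) :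
    (if (r, N + r) ∈ f.horiz then 1 else 0) +
    (if (r, N + r - 1) ∈ f.horiz then 1 else 0) +
    (if (r, N + r) ∈ f.vert then 1 else 0) +
    (if (r - 1, N + r) ∈ f.vert then 1 else 0) = 2 := by
  have hd := hf.deg2 r h1 h2
  unfold degree at hd
  dsimp only at hd
  rw [if_congr (show (1 ≤ N + r ∧ (r, N + r - 1) ∈ f.horiz) ↔ (r, N + r - 1) ∈ f.horiz from
      ⟨fun h => h.2, fun h => ⟨by omega, h⟩⟩) rfl rfl] at hd
  rw [if_congr (show (1 ≤ r ∧ (r - 1, N + r) ∈ f.vert) ↔ (r - 1, N + r) ∈ f.vert from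
      ⟨fun h => h.2, fun h => ⟨h1, h⟩⟩) rfl rfl] at hd
  omega

set_option maxHeartbeats 4000000 in
/-- **the main local lemma**: the left boundary word of the reflection of `WLd f u`,
read off against the right boundary edges of `f` -/
lemma uprime_char (hf : NiceCfg N f v) (i : Fin N) :
    leftWord (reflect N (WLd f u)) i = true ↔
      ((N - i.val, N + (N - i.val)) ∈ f.horiz ∨
        (N - i.val - 1, N + (N - i.val)) ∈ f.vert) := by
  have hn : i.val < N := i.isLt
  set r := N - i.val with hr
  have hr1 : 1 ≤ r := by omega
  have hr2 : r ≤ N := by omega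
  rw [leftWord_true, degree_reflect_WLd hf, ite_add_ite_eq_one]
  -- resolve the two gyration memberships through the odd cell (r, N+r-1)
  have hodd : oddCell N r (N + r - 1) := by
    unfold oddCell isCell
    omega
  have hno : ¬ (1 ≤ r ∧ oddCell N (r - 1) (N + r - 1)) := by
    rintro ⟨_, ho⟩
    unfold oddCell isCell at ho
    omega
  have hT : ((r, N + r - 1) ∈ (Gy (Ec f u)).horiz) ↔
      (fixCell (Ec f u) r (N + r - 1) ↔ (r, N + r - 1) ∈ f.horiz) := by
    rw [Gy_horiz, gyH_lower hno hodd, Ec_horiz hf (by omega)]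
  have hR : ((r, N + r) ∈ (Gy (Ec f u)).vert) ↔
      (fixCell (Ec f u) r (N + r - 1) ↔ (r, N + r) ∈ f.vert) := by
    rw [Gy_vert, gyV_left (show (1:ℕ) ≤ N + r from by omega) hodd, Ec_vert hf (by omega)]
  rw [hT, hR]
  have hdeg := deg2_expand hf hr1 hr2
  have hnp := hf.nopath r hr1 hr2
  generalize fixCell (Ec f u) r (N + r - 1) = F
  by_cases hTf : (r, N + r - 1) ∈ f.horiz <;>
    by_cases hRf : (r, N + r) ∈ f.vert <;>
    by_cases hHr : (r, N + r) ∈ f.horiz <;>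
    by_cases hVu : (r - 1, N + r) ∈ f.vert <;>
    simp only [hTf, hRf, hHr, hVu, if_true, if_false, iff_true, iff_false] at hdeg ⊢ <;>
    first
      | omega
      | tauto


/-! ## the bijection between the zeroes of `v` and the ones of the new left word -/

/-- `Hr i`: `f` contains the horizontal edge incident to `R_{N-i}` -/
def HrP (N : ℕ) (f : Config N) (i : Fin N) : Prop := (N - i.val, N + (N - i.val)) ∈ f.horiz
/-- `Vd i`: `f` contains the vertical edge incident to `R_{N-i}` -/
def VdP (N : ℕ) (f : Config N) (i : Fin N) : Prop := (N - i.val, N + 1 + (N - i.val)) ∈ f.vert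
/-- `Vu i`: `f` contains the vertical edge incident to `R_{N-i-1}` from above -/
def VuP (N : ℕ) (f : Config N) (i : Fin N) : Prop := (N - i.val - 1, N + (N - i.val)) ∈ f.vert

def SvSet (N : ℕ) (v : Fin N → Bool) : Finset (Fin N) :=
  Finset.univ.filter fun i => wstar v i = true

noncomputable def SpSet (N : ℕ) (f : Config N) (u : Fin N → Bool) : Finset (Fin N) :=
  Finset.univ.filter fun i => leftWord (reflect N (WLd f u)) i = true

noncomputable def psiF (N : ℕ) (f : Config N) : Fin N → Fin N := fun i =>
  if HrP N f i then i
  else ⟨i.val - 1, lt_of_le_of_lt (Nat.sub_le _ _) i.isLt⟩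

lemma Sv_iff (hf : NiceCfg N f v) (i : Fin N) :
    i ∈ SvSet N v ↔
      ((if HrP N f i then 1 else 0) + (if VdP N f i then 1 else 0) = 1) := by
  rw [SvSet, Finset.mem_filter]
  have hn : i.val < N := i.isLt
  have h1 : wstar v i = true ↔ v i.rev = false := by
    unfold wstar
    cases v i.rev <;> simp
  have h2 : i.rev.val + 1 = N - i.val := by
    have : i.rev.val = N - (i.val + 1) := rfl
    omega
  rw [h1, hf.vword i.rev, h2, degree_Rvtx hf (by omega) (by omega)]
  unfold HrP VdP
  simp only [Finset.mem_univ, true_and]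

lemma Sp_iff (hf : NiceCfg N f v) (i : Fin N) :
    i ∈ SpSet N f u ↔ (HrP N f i ∨ VuP N f i) := by
  rw [SpSet, Finset.mem_filter]
  rw [uprime_char hf i]
  unfold HrP VuP
  simp only [Finset.mem_univ, true_and]

lemma not_Hr_and_Vd (hf : NiceCfg N f v) (i : Fin N) : ¬ (HrP N f i ∧ VdP N f i) := by
  rintro ⟨h1, h2⟩
  have hn : i.val < N := i.isLt
  have hd := hf.degR (N - i.val) (by omega) (by omega)
  rw [degree_Rvtx hf (by omega) (by omega)] at hd
  unfold HrP at h1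
  unfold VdP at h2
  rw [if_pos h1, if_pos h2] at hd
  omega

lemma Vd_pos (hf : NiceCfg N f v) {i : Fin N} (h : VdP N f i) : 1 ≤ i.val := by
  by_contra h0
  have hi : i.val = 0 := by omega
  unfold VdP at h
  rw [hi] at h
  simp only [Nat.sub_zero] at h
  rw [hf.vext] at h
  omega

lemma Vu_small (hf : NiceCfg N f v) {i : Fin N} (h : VuP N f i) : i.val + 2 ≤ N := by
  unfold VuP at h
  have hn : i.val < N := i.isLt
  by_contra h0
  have hi : i.val + 1 = N := by omega
  have : N - i.val - 1 = 0 := by omega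
  rw [this] at h
  exact f_vert_col0 hf (by omega) h

lemma Vd_succ_iff_Vu (hf : NiceCfg N f v) {i : Fin N} (h2 : i.val + 2 ≤ N) :
    VdP N f ⟨i.val + 1, by omega⟩ ↔ VuP N f i := by
  unfold VdP VuP
  rw [show N - (i.val + 1) = N - i.val - 1 from by omega,
    show N + 1 + (N - i.val - 1) = N + (N - i.val) from by omega]

lemma psi_spec (hf : NiceCfg N f v) {i : Fin N} (hi : i ∈ SvSet N v) :
    (HrP N f i ∧ psiF N f i = i) ∨
    (VdP N f i ∧ ¬ HrP N f i ∧ 1 ≤ i.val ∧ (psiF N f i).val + 1 = i.val) := by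
  rw [Sv_iff hf] at hi
  by_cases hH : HrP N f i
  · left
    refine ⟨hH, ?_⟩
    unfold psiF
    rw [if_pos hH]
  · right
    have hV : VdP N f i := by
      by_contra hV
      rw [if_neg hH, if_neg hV] at hi
      omega
    have hp := Vd_pos hf hV
    refine ⟨hV, hH, hp, ?_⟩
    unfold psiF
    rw [if_neg hH]
    dsimp only
    omega

lemma psi_mem (hf : NiceCfg N f v) {i : Fin N} (hi : i ∈ SvSet N v) :
    psiF N f i ∈ SpSet N f (u := u) := by
  rcases psi_spec hf hi with ⟨hH, hp⟩ | ⟨hV, hH, h1, hp⟩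
  · rw [hp, Sp_iff hf]
    exact Or.inl hH
  · rw [Sp_iff hf]
    right
    unfold VuP
    have : (psiF N f i).val = i.val - 1 := by omega
    rw [this]
    unfold VdP at hV
    rw [show N - (i.val - 1) - 1 = N - i.val from by omega,
      show N + (N - (i.val - 1)) = N + 1 + (N - i.val) from by omega]
    exact hV

lemma psi_mono (hf : NiceCfg N f v) :
    ∀ i ∈ SvSet N v, ∀ i₂ ∈ SvSet N v, i < i₂ → psiF N f i < psiF N f i₂ := by
  intro i hi i₂ hi₂ hlt
  rcases psi_spec hf hi with ⟨hH, hp⟩ | ⟨hV, hH, h1, hp⟩ <;>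
    rcases psi_spec hf hi₂ with ⟨hH₂, hp₂⟩ | ⟨hV₂, hH₂, h1₂, hp₂⟩
  · rw [hp, hp₂]; exact hlt
  · rw [hp]
    rw [Fin.lt_def] at hlt ⊢
    have hn : i.val < N := i.isLt
    have hn₂ : i₂.val < N := i₂.isLt
    -- need ψ i₂ = i₂ - 1 > i, i.e. i < i₂ - 1, i.e. i₂ ≠ i + 1
    by_contra hc
    have hei : i₂.val = i.val + 1 := by omega
    -- then Hr i and Vd (i+1) = Vu i, contradicting nopath
    have hvu : VuP N f i := by
      rw [← Vd_succ_iff_Vu hf (by omega)]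
      have : (⟨i.val + 1, by omega⟩ : Fin N) = i₂ := Fin.ext (by dsimp only; omega)
      rw [this]
      exact hV₂
    have := hf.nopath (N - i.val) (by omega) (by omega)
    unfold HrP at hH
    unfold VuP at hvu
    exact this ⟨hH, hvu⟩
  · rw [hp₂]
    rw [Fin.lt_def] at hlt ⊢
    omega
  · rw [Fin.lt_def] at hlt ⊢
    omega

lemma psi_surj (hf : NiceCfg N f v) :
    ∀ y ∈ SpSet N f (u := u), ∃ i ∈ SvSet N v, psiF N f i = y := by
  intro y hy
  rw [Sp_iff hf] at hy
  rcases hy with hH | hVu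
  · refine ⟨y, ?_, ?_⟩
    · rw [Sv_iff hf]
      rw [if_pos hH, if_neg (fun hV => not_Hr_and_Vd hf y ⟨hH, hV⟩)]
    · unfold psiF
      rw [if_pos hH]
  · have hsm := Vu_small hf hVu
    set i : Fin N := ⟨y.val + 1, by omega⟩ with hidef
    have hVd : VdP N f i := by
      rw [Vd_succ_iff_Vu hf (by omega)]
      exact hVu
    have hH : ¬ HrP N f i := fun hH => not_Hr_and_Vd hf i ⟨hH, hVd⟩
    refine ⟨i, ?_, ?_⟩
    · rw [Sv_iff hf, if_neg hH, if_pos hVd]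
    · unfold psiF
      rw [if_neg hH]
      exact Fin.ext (by simp [hidef])


lemma onesList_eq_sort (σ : Fin N → Bool) :
    onesList σ = (Finset.univ.filter fun i => σ i = true).sort (· ≤ ·) := rfl

lemma SvSet_sort : (Finset.univ.filter fun i => wstar v i = true) = SvSet N v := rfl
lemma SpSet_sort :
    (Finset.univ.filter fun i => leftWord (reflect N (WLd f u)) i = true) = SpSet N f u := rfl

lemma card_match (hf : NiceCfg N f v) :
    ∀ i ∈ SvSet N v,
      ((SpSet N f u).filter (· < psiF N f i)).card = ((SvSet N v).filter (· < i)).card :=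
  filter_card_match (fun i hi => psi_mem hf hi) (psi_surj hf) (psi_mono hf)

/-- membership in the inserted horizontal edges of the inner left-Wieland drift -/
lemma insH_inner (hf : NiceCfg N f v) (i : Fin N) :
    ((N - i.val, i.val) ∈ insH (leftWord (reflect N (WLd f u))) (wstar v)) ↔ HrP N f i := by
  constructor
  · rintro ⟨j, i0, hj1, hj2, hpe⟩
    have hval : i.val = i0.val := congrArg Prod.snd hpe
    have hi0 : i0 = i := Fin.ext hval.symm
    subst hi0
    rw [onesList_eq_sort, SvSet_sort, sort_getElem?] at hj1
    rw [onesList_eq_sort, SpSet_sort, sort_getElem?] at hj2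
    by_contra hH
    rcases psi_spec hf hj1.1 with ⟨hH', _⟩ | ⟨hV, _, h1, hp⟩
    · exact hH hH'
    · obtain ⟨x, hx, hpsix⟩ := psi_surj hf i0 hj2.1
      have hcm := card_match (u := u) hf x hx
      rw [hpsix] at hcm
      have : x = i0 := filter_card_eq_of_mem hx hj1.1 (by rw [← hcm, hj2.2, hj1.2])
      subst this
      rw [hpsix] at hp
      omega
  · intro hH
    have hSv : i ∈ SvSet N v := by
      rw [Sv_iff hf, if_pos hH, if_neg (fun hV => not_Hr_and_Vd hf i ⟨hH, hV⟩)]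
    have hpsi : psiF N f i = i := by
      unfold psiF
      rw [if_pos hH]
    refine ⟨((SvSet N v).filter (· < i)).card, i, ?_, ?_, rfl⟩
    · rw [onesList_eq_sort, SvSet_sort, sort_getElem?]
      exact ⟨hSv, rfl⟩
    · rw [onesList_eq_sort, SpSet_sort, sort_getElem?]
      refine ⟨by rw [← hpsi]; exact psi_mem hf hSv, ?_⟩
      have := card_match (u := u) hf i hSv
      rw [hpsi] at this
      exact this

/-- membership in the inserted vertical edges of the inner left-Wieland drift -/
lemma insV_inner (hf : NiceCfg N f v) (i : Fin N) :
    ((N - i.val, i.val) ∈ insV (leftWord (reflect N (WLd f u))) (wstar v)) ↔ VdP N f i := by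
  constructor
  · rintro ⟨j, i0, i', hj1, hj2, hsucc, hpe⟩
    have hval : i.val = i0.val := congrArg Prod.snd hpe
    have hi0 : i0 = i := Fin.ext hval.symm
    subst hi0
    rw [onesList_eq_sort, SvSet_sort, sort_getElem?] at hj1
    rw [onesList_eq_sort, SpSet_sort, sort_getElem?] at hj2
    obtain ⟨x, hx, hpsix⟩ := psi_surj hf i' hj2.1
    have hcm := card_match (u := u) hf x hx
    rw [hpsix] at hcm
    have hxe : x = i0 := filter_card_eq_of_mem hx hj1.1 (by rw [← hcm, hj2.2, hj1.2])
    subst hxe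
    rcases psi_spec hf hj1.1 with ⟨_, hp⟩ | ⟨hV, _, _, _⟩
    · rw [hp] at hpsix
      subst hpsix
      omega
    · exact hV
  · intro hV
    have hH : ¬ HrP N f i := fun hH => not_Hr_and_Vd hf i ⟨hH, hV⟩
    have hSv : i ∈ SvSet N v := by
      rw [Sv_iff hf, if_neg hH, if_pos hV]
    have h1 : 1 ≤ i.val := Vd_pos hf hV
    have hpsi : (psiF N f i).val + 1 = i.val := by
      unfold psiF
      rw [if_neg hH]
      dsimp only
      omega
    refine ⟨((SvSet N v).filter (· < i)).card, i, psiF N f i, ?_, ?_, hpsi, rfl⟩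
    · rw [onesList_eq_sort, SvSet_sort, sort_getElem?]
      exact ⟨hSv, rfl⟩
    · rw [onesList_eq_sort, SpSet_sort, sort_getElem?]
      exact ⟨psi_mem hf hSv, card_match (u := u) hf i hSv⟩

lemma insV_col0 {u₀ um : Fin N → Bool} {r : ℕ} : (r, 0) ∉ insV u₀ um := by
  rintro ⟨j, i0, i', _, _, hsucc, hpe⟩
  have : (0:ℕ) = i0.val := congrArg Prod.snd hpe
  omega

lemma G_row0_horiz (hf : NiceCfg N f v) (c : ℕ) : (0, c) ∉ (Gy (Ec f u)).horiz := by
  rw [Gy_horiz, gyH_none]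
  · intro hm
    rcases hm with hm | hm
    · exact f_horiz_col0 hf (by
        by_cases h0 : N = 0
        · omega
        · right; right; left; omega) hm
    · obtain ⟨k, hk⟩ := insH_shape hm
      have h1 : (0:ℕ) = N - k.val := congrArg Prod.fst hk
      have := k.isLt
      omega
  · rintro ⟨h0, _⟩; omega
  · intro ho
    unfold oddCell isCell at ho
    omega

lemma G_row0_vert (hf : NiceCfg N f v) (c : ℕ) : (0, c) ∉ (Gy (Ec f u)).vert := by
  rw [Gy_vert, gyV_none]
  · intro hm
    rcases hm with hm | hm
    · by_cases hN : N = 0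
      · subst hN
        rw [show ((0:ℕ), c) = ((0:ℕ), c) from rfl] at hm
        rw [hf.vext c] at hm
        omega
      · exact f_vert_col0 hf (by right; right; right; exact ⟨rfl, by omega⟩) hm
    · obtain ⟨k, hk⟩ := insV_shape hm
      have h1 : (0:ℕ) = N - k.val := congrArg Prod.fst hk
      have := k.isLt
      omega
  · rintro ⟨h0, ho⟩
    unfold oddCell isCell at ho
    omega
  · intro ho
    unfold oddCell isCell at ho
    omega

lemma Config_ext {A B : Config N} (h1 : A.horiz = B.horiz) (h2 : A.vert = B.vert) :
    A = B := by
  cases A; cases B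
  simp_all

/-- **the inner configuration is the transport of the gyrated configuration** -/
lemma Ec_inner_eq_Phi (hf : NiceCfg N f v) :
    Ec (reflect N (WLd f u)) (wstar v) = Phi N (Gy (Ec f u)) := by
  apply Config_ext
  · ext ⟨r, c⟩
    rw [show ((r,c) ∈ (Ec (reflect N (WLd f u)) (wstar v)).horiz) ↔
        ((r,c) ∈ (reflect N (WLd f u)).horiz ∨
          (r,c) ∈ insH (leftWord (reflect N (WLd f u))) (wstar v)) from Iff.rfl,
      Phi_horiz]
    constructor
    · rintro (hm | hm)
      · rw [reflect_horiz, WLd_horiz] at hm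
        obtain ⟨hc1, hc2, hm⟩ := hm
        refine ⟨by omega, ?_⟩
        rw [show 2 * N + 1 - c - 1 = 2 * N - c from by omega] at hm
        exact hm
      · obtain ⟨k, hk⟩ := insH_shape hm
        obtain ⟨hr, hc⟩ : r = N - k.val ∧ c = k.val :=
          ⟨congrArg Prod.fst hk, congrArg Prod.snd hk⟩
        subst hr; subst hc
        have hkN := k.isLt
        rw [insH_inner hf k] at hm
        refine ⟨by omega, ?_⟩
        rw [show 2 * N - k.val = N + (N - k.val) from by omega]
        exact (G_Hr hf (N - k.val)).2 hm
    · rintro ⟨hc, hm⟩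
      by_cases hole : r + c = N
      · by_cases hr0 : r = 0
        · exfalso
          subst hr0
          exact G_row0_horiz hf _ hm
        · right
          have hcN : c < N := by omega
          have hpt : ((N : ℕ) - (⟨c, hcN⟩ : Fin N).val, (⟨c, hcN⟩ : Fin N).val)
              = ((r, c) : ℕ × ℕ) := by
            rw [Prod.mk.injEq]
            exact ⟨by show N - c = r; omega, rfl⟩
          rw [← hpt, insH_inner hf ⟨c, hcN⟩]
          unfold HrP
          dsimp only
          rw [show N - c = r from by omega]
          refine (G_Hr (u := u) hf r).1 ?_
          rw [show N + r = 2 * N - c from by omega]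
          exact hm
      · left
        rw [reflect_horiz, WLd_horiz]
        refine ⟨by omega, by omega, ?_⟩
        rw [show 2 * N + 1 - c - 1 = 2 * N - c from by omega]
        exact hm
  · ext ⟨r, c⟩
    rw [show ((r,c) ∈ (Ec (reflect N (WLd f u)) (wstar v)).vert) ↔
        ((r,c) ∈ (reflect N (WLd f u)).vert ∨
          (r,c) ∈ insV (leftWord (reflect N (WLd f u))) (wstar v)) from Iff.rfl,
      Phi_vert]
    constructor
    · rintro (hm | hm)
      · rw [reflect_vert, WLd_vert] at hm
        obtain ⟨hc1, hc2, hm⟩ := hm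
        refine ⟨by omega, ?_⟩
        rw [show 2 * N + 2 - c - 1 = 2 * N + 1 - c from by omega] at hm
        exact hm
      · obtain ⟨k, hk⟩ := insV_shape hm
        obtain ⟨hr, hc⟩ : r = N - k.val ∧ c = k.val :=
          ⟨congrArg Prod.fst hk, congrArg Prod.snd hk⟩
        subst hr; subst hc
        have hkN := k.isLt
        rw [insV_inner hf k] at hm
        refine ⟨by omega, ?_⟩
        rw [show 2 * N + 1 - k.val = N + 1 + (N - k.val) from by omega]
        exact (G_Vd hf (N - k.val)).2 hm
    · rintro ⟨hc, hm⟩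
      by_cases hole : r + c = N
      · by_cases hr0 : r = 0
        · exfalso
          subst hr0
          exact G_row0_vert hf _ hm
        · right
          have hcN : c < N := by omega
          have hpt : ((N : ℕ) - (⟨c, hcN⟩ : Fin N).val, (⟨c, hcN⟩ : Fin N).val)
              = ((r, c) : ℕ × ℕ) := by
            rw [Prod.mk.injEq]
            exact ⟨by show N - c = r; omega, rfl⟩
          rw [← hpt, insV_inner hf ⟨c, hcN⟩]
          unfold VdP
          dsimp only
          rw [show N - c = r from by omega]
          refine (G_Vd (u := u) hf r).1 ?_
          rw [show N + 1 + r = 2 * N + 1 - c from by omega]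
          exact hm
      · left
        rw [reflect_vert, WLd_vert]
        refine ⟨by omega, by omega, ?_⟩
        rw [show 2 * N + 2 - c - 1 = 2 * N + 1 - c from by omega]
        exact hm


/-- **the core cancellation lemma** -/
lemma core (hf : NiceCfg N f v) :
    WLd (reflect N (WLd f u)) (wstar v) = reflect N f := by
  have hGy : Gy (Ec (reflect N (WLd f u)) (wstar v)) = Phi N (Ec f u) := by
    rw [Ec_inner_eq_Phi hf, Gy_Phi, Gy_Gy _ (Ec_bot hf)]
  apply Config_ext
  · ext ⟨r, c⟩
    rw [show ((r, c) ∈ (WLd (reflect N (WLd f u)) (wstar v)).horiz) ↔ _ from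
        WLd_horiz (reflect N (WLd f u)) (wstar v) r c, hGy, Phi_horiz, reflect_horiz]
    constructor
    · rintro ⟨h1, h2, h3, hm⟩
      rw [show 2 * N - (c - 1) = 2 * N + 1 - c from by omega,
        Ec_horiz hf (by omega)] at hm
      exact hm
    · intro hm
      have hs := hf.hslot _ hm
      unfold hSlot at hs
      dsimp only at hs
      refine ⟨by omega, by omega, by omega, ?_⟩
      rw [show 2 * N - (c - 1) = 2 * N + 1 - c from by omega,
        Ec_horiz hf (by omega)]
      exact hm
  · ext ⟨r, c⟩
    rw [show ((r, c) ∈ (WLd (reflect N (WLd f u)) (wstar v)).vert) ↔ _ from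
        WLd_vert (reflect N (WLd f u)) (wstar v) r c, hGy, Phi_vert, reflect_vert]
    constructor
    · rintro ⟨h1, h2, h3, hm⟩
      rw [show 2 * N + 1 - (c - 1) = 2 * N + 2 - c from by omega,
        Ec_vert hf (by omega)] at hm
      exact hm
    · intro hm
      have hs := hf.vslot _ hm
      unfold vSlot at hs
      dsimp only at hs
      refine ⟨by omega, by omega, by omega, ?_⟩
      rw [show 2 * N + 1 - (c - 1) = 2 * N + 2 - c from by omega,
        Ec_vert hf (by omega)]
      exact hm

end Core

lemma wstar_wstar (u : Fin N → Bool) : wstar (wstar u) = u := by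
  funext i
  unfold wstar
  rw [Fin.rev_rev, Bool.not_not]

lemma reflect_reflect (f : Config N) (hH : ∀ r c, (r, c) ∈ f.horiz → c ≤ 2 * N)
    (hV : ∀ r c, (r, c) ∈ f.vert → c ≤ 2 * N + 1) : reflect N (reflect N f) = f := by
  apply Config_ext
  · ext ⟨r, c⟩
    rw [reflect_horiz, reflect_horiz]
    by_cases hc : c ≤ 2 * N + 1
    · rw [show 2 * N + 1 - (2 * N + 1 - c) = c from by omega]
    · rw [show 2 * N + 1 - c = 0 from by omega]
      constructor
      · intro hm
        have := hH _ _ hm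
        omega
      · intro hm
        have := hH _ _ hm
        omega
  · ext ⟨r, c⟩
    rw [reflect_vert, reflect_vert]
    by_cases hc : c ≤ 2 * N + 2
    · rw [show 2 * N + 2 - (2 * N + 2 - c) = c from by omega]
    · rw [show 2 * N + 2 - c = 0 from by omega]
      constructor
      · intro hm
        have := hV _ _ hm
        omega
      · intro hm
        have := hV _ _ hm
        omega

lemma degree_reflect (f : Config N) {r c : ℕ} (h1 : 1 ≤ c) (h2 : c ≤ 2 * N + 1) :
    degree (reflect N f) (r, c) = degree f (r, 2 * N + 2 - c) := by
  unfold degree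
  dsimp only
  rw [if_congr (show ((r, c) ∈ (reflect N f).horiz) ↔ (r, 2 * N + 1 - c) ∈ f.horiz from
      reflect_horiz f r c) rfl rfl]
  rw [if_congr (show (1 ≤ c ∧ (r, c - 1) ∈ (reflect N f).horiz) ↔
      (r, 2 * N + 2 - c) ∈ f.horiz from by
        rw [reflect_horiz, show 2 * N + 1 - (c - 1) = 2 * N + 2 - c from by omega]
        exact ⟨fun h => h.2, fun h => ⟨h1, h⟩⟩) rfl rfl]
  rw [if_congr (show ((r, c) ∈ (reflect N f).vert) ↔ (r, 2 * N + 2 - c) ∈ f.vert from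
      reflect_vert f r c) rfl rfl]
  rw [if_congr (show (1 ≤ r ∧ (r - 1, c) ∈ (reflect N f).vert) ↔
      (1 ≤ r ∧ (r - 1, 2 * N + 2 - c) ∈ f.vert) from by
        rw [reflect_vert]) rfl rfl]
  rw [if_congr (show (1 ≤ 2 * N + 2 - c ∧ (r, 2 * N + 2 - c - 1) ∈ f.horiz) ↔
      (r, 2 * N + 1 - c) ∈ f.horiz from by
        rw [show 2 * N + 2 - c - 1 = 2 * N + 1 - c from by omega]
        exact ⟨fun h => h.2, fun h => ⟨by omega, h⟩⟩) rfl rfl]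
  generalize ((r, 2 * N + 1 - c) ∈ f.horiz) = P2
  generalize ((r, 2 * N + 2 - c) ∈ f.horiz) = P1
  generalize ((r, 2 * N + 2 - c) ∈ f.vert) = P3
  by_cases hP1 : P1 <;> by_cases hP2 : P2 <;> by_cases hP3 : P3 <;>
    by_cases hP4 : (1 ≤ r ∧ (r - 1, 2 * N + 2 - c) ∈ f.vert) <;>
    simp [hP1, hP2, hP3, hP4]

lemma nice_of_TFPL {f : Config N} {v : Fin N → Bool} (hT : IsTFPL N f)
    (hB : ∀ i : Fin N, v i = false ↔ degree f (Rvtx N (i.val + 1)) = 1) : NiceCfg N f v := by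
  obtain ⟨h0, h1, h2, h3, h4, h5, h6, h7⟩ := hT
  refine ⟨h0, h1, h2, h4, ?_, ?_, hB⟩
  · intro r hr1 hr2
    exact h5 r (N + r) hr1 hr2 (by omega) (by omega) (by omega) (by omega)
  · rintro r hr1 hr2 ⟨hh, hv⟩
    have hvs := h1 _ hv
    unfold vSlot at hvs
    dsimp only at hvs
    have hr2' : 2 ≤ r := by omega
    have hadj1 : adj f (Rvtx N (r - 1)) ((r, N + r) : ℕ × ℕ) := by
      unfold adj Rvtx
      right; right; left
      constructor
      · rw [Prod.mk.injEq]
        exact ⟨by omega, by omega⟩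
      · rw [show ((r - 1, N + 1 + (r - 1)) : ℕ × ℕ) = ((r - 1, N + r) : ℕ × ℕ) from by
          rw [Prod.mk.injEq]; exact ⟨rfl, by omega⟩]
        exact hv
    have hadj2 : adj f ((r, N + r) : ℕ × ℕ) (Rvtx N r) := by
      unfold adj Rvtx
      left
      constructor
      · rw [Prod.mk.injEq]
        exact ⟨rfl, by omega⟩
      · exact hh
    exact h7 (r - 1) r (by omega) (by omega) hr1 hr2 (by omega)
      (Relation.ReflTransGen.head hadj1 (Relation.ReflTransGen.single hadj2))

lemma nice_reflect {f : Config N} {u : Fin N → Bool} (hT : IsTFPL N f)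
    (hB : ∀ i : Fin N, u i = true ↔ degree f (Lvtx N (i.val + 1)) = 1) :
    NiceCfg N (reflect N f) (wstar u) := by
  obtain ⟨h0, h1, h2, h3, h4, h5, h6, h7⟩ := hT
  constructor
  · rintro ⟨r, c⟩ hp
    rw [reflect_horiz] at hp
    have hs := h0 _ hp
    unfold hSlot at hs ⊢
    dsimp only at hs ⊢
    omega
  · rintro ⟨r, c⟩ hp
    rw [reflect_vert] at hp
    have hs := h1 _ hp
    unfold vSlot at hs ⊢
    dsimp only at hs ⊢
    omega
  · intro j
    rw [reflect_vert, h2 (2 * N + 2 - j)]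
    omega
  · intro r hr1 hr2
    rw [show Rvtx N r = ((r, N + 1 + r) : ℕ × ℕ) from rfl,
      degree_reflect f (by omega) (by omega),
      show ((r, 2 * N + 2 - (N + 1 + r)) : ℕ × ℕ) = Lvtx N (N + 1 - r) from by
        unfold Lvtx; rw [Prod.mk.injEq]; exact ⟨by omega, by omega⟩]
    exact h3 (N + 1 - r) (by omega) (by omega)
  · intro r hr1 hr2
    rw [degree_reflect f (by omega) (by omega)]
    exact h5 r (2 * N + 2 - (N + r)) hr1 hr2 (by omega) (by omega) (by omega) (by omega)
  · rintro r hr1 hr2 ⟨hh, hv⟩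
    rw [reflect_horiz] at hh
    rw [reflect_vert] at hv
    have hvs := h1 _ hv
    unfold vSlot at hvs
    dsimp only at hvs
    have hr2' : 2 ≤ r := by omega
    have hadj1 : adj f (Lvtx N (N + 1 - r)) ((r, N + 2 - r) : ℕ × ℕ) := by
      unfold adj Lvtx
      left
      constructor
      · rw [Prod.mk.injEq]
        exact ⟨by omega, by omega⟩
      · rw [show ((N + 1 - (N + 1 - r), N + 1 - r) : ℕ × ℕ) =
            ((r, 2 * N + 1 - (N + r)) : ℕ × ℕ) from by
          rw [Prod.mk.injEq]; exact ⟨by omega, by omega⟩]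
        exact hh
    have hadj2 : adj f ((r, N + 2 - r) : ℕ × ℕ) (Lvtx N (N + 2 - r)) := by
      unfold adj Lvtx
      right; right; right
      constructor
      · rw [Prod.mk.injEq]
        exact ⟨by omega, by omega⟩
      · rw [show ((N + 1 - (N + 2 - r), N + 2 - r) : ℕ × ℕ) =
            ((r - 1, 2 * N + 2 - (N + r)) : ℕ × ℕ) from by
          rw [Prod.mk.injEq]; exact ⟨by omega, by omega⟩]
        exact hv
    exact h6 (N + 1 - r) (N + 2 - r) (by omega) (by omega) (by omega) (by omega) (by omega)
      (Relation.ReflTransGen.head hadj1 (Relation.ReflTransGen.single hadj2))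
  · intro i
    have hn : i.val < N := i.isLt
    have h1' : wstar u i = false ↔ u i.rev = true := by
      unfold wstar
      cases u i.rev <;> simp
    rw [h1', hB i.rev]
    have h2' : i.rev.val + 1 = N - i.val := by
      have : i.rev.val = N - (i.val + 1) := rfl
      omega
    rw [h2']
    rw [show Rvtx N (i.val + 1) = ((i.val + 1, N + i.val + 2) : ℕ × ℕ) from by
      unfold Rvtx; rw [Prod.mk.injEq]; exact ⟨rfl, by omega⟩]
    rw [degree_reflect f (by omega) (by omega)]
    rw [show ((i.val + 1, 2 * N + 2 - (N + i.val + 2)) : ℕ × ℕ) = Lvtx N (N - i.val) from by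
      unfold Lvtx; rw [Prod.mk.injEq]; exact ⟨by omega, by omega⟩]






/-- (1) If `f` is a TFPL with boundary `(u⁺, v; w)` and `u` is a word with
`u →h u⁺`, then `WR_v(WL_u(f)) = f`.  (2) If `f` is a TFPL with boundary `(u, v⁺; w)` and `v`
is a word with `v →v v⁺`, then `WL_u(WR_v(f)) = f`. -/
theorem WL_WR_inverse (N : ℕ) :
    (∀ (f : Config N) (up v w u : Fin N → Bool), IsTFPL N f → HasBoundary f up v w →
        hstrip u up → WRd (WLd f u) v = f) ∧
    (∀ (f : Config N) (u vp w v : Fin N → Bool), IsTFPL N f → HasBoundary f u vp w →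
        vstrip v vp → WLd (WRd f v) u = f) := by
  constructor
  · intro f up v w u hT hB _
    have hf : NiceCfg N f v := nice_of_TFPL hT hB.2.1
    have hcore := core (u := u) hf
    show reflect N (WLd (reflect N (WLd f u)) (wstar v)) = f
    rw [hcore]
    exact reflect_reflect f
      (fun r c hm => by have := hT.1 _ hm; unfold hSlot at this; dsimp only at this; omega)
      (fun r c hm => by have := hT.2.1 _ hm; unfold vSlot at this; dsimp only at this; omega)
  · intro f u vp w v hT hB _
    have hf : NiceCfg N (reflect N f) (wstar u) := nice_reflect hT hB.1
    have hcore := core (u := wstar v) hf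
    rw [wstar_wstar] at hcore
    rw [reflect_reflect f
      (fun r c hm => by have := hT.1 _ hm; unfold hSlot at this; dsimp only at this; omega)
      (fun r c hm => by have := hT.2.1 _ hm; unfold vSlot at this; dsimp only at this; omega)]
      at hcore
    exact hcore

end TFPLFormal
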